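/- Let m₁, m₂, m₃ be positive integers, let j₁, j₂, j₃ ∈ {0,1}, and let ε ∈ {+1,−1}. With f₁ = cos and f₀ = sin, the function F : T³ → ℝ given by F(x₁,x₂,x₃) = f_{j₁}(m₁x₁)·f_{j₂}(m₂x₂)·f_{j₃}(m₃x₃) + ε·f_{1−j₁}(m₁x₁)·f_{1−j₂}(m₂x₂)·f_{1−j₃}(m₃x₃) has exactly two nodal domains. -/

import Mathlib

noncomputable section

/-- `cos (m x)` is `2π`-periodic. -/
lemma cos_mul_periodic (m : ℕ) :
    Function.Periodic (fun x : ℝ => Real.cos (m * x)) (2 * Real.pi) := by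
  intro x
  have h : (m : ℝ) * (x + 2 * Real.pi) = m * x + (m : ℤ) * (2 * Real.pi) := by
    push_cast; ring
  simp only [h, Real.cos_add_int_mul_two_pi]

/-- `sin (m x)` is `2π`-periodic. -/
lemma sin_mul_periodic (m : ℕ) :
    Function.Periodic (fun x : ℝ => Real.sin (m * x)) (2 * Real.pi) := by
  intro x
  have h : (m : ℝ) * (x + 2 * Real.pi) = m * x + (m : ℤ) * (2 * Real.pi) := by
    push_cast; ring
  simp only [h, Real.sin_add_int_mul_two_pi]

/-- The function `cos (m ·)` on the circle `ℝ/2πℤ`. -/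
def cosT (m : ℕ) : AddCircle (2 * Real.pi) → ℝ := (cos_mul_periodic m).lift

/-- The function `sin (m ·)` on the circle `ℝ/2πℤ`. -/
def sinT (m : ℕ) : AddCircle (2 * Real.pi) → ℝ := (sin_mul_periodic m).lift

/-- `f₁ = cos`, `f₀ = sin` (with frequency `m`) on the circle `ℝ/2πℤ`. -/
def fT (j : Fin 2) (m : ℕ) : AddCircle (2 * Real.pi) → ℝ :=
  if j = 1 then cosT m else sinT m

/-- The flat 3-torus `T³ = (ℝ/2πℤ)³`. -/
abbrev T3 := AddCircle (2 * Real.pi) × AddCircle (2 * Real.pi) × AddCircle (2 * Real.pi)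




open Real Set

abbrev V3 := ℝ × ℝ × ℝ

def AA (v : V3) : ℝ := Real.cos v.2.1 * Real.cos v.2.2
def BB (v : V3) : ℝ := Real.sin v.2.1 * Real.sin v.2.2
def HH (v : V3) : ℝ := Real.cos v.1 * AA v + Real.sin v.1 * BB v
def RR (v : V3) : ℝ := Real.sqrt (AA v ^ 2 + BB v ^ 2)
def PH : Set V3 := {v | 0 < HH v}
def Cent (v : V3) : Prop := 0 < RR v ∧ Real.cos v.1 * RR v = AA v ∧ Real.sin v.1 * RR v = BB v

lemma hh_continuous : Continuous HH := by unfold HH AA BB; fun_prop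

lemma seg_coords (p q : V3) (t : ℝ) :
    p + t • (q - p) = (p.1 + t*(q.1-p.1), p.2.1 + t*(q.2.1-p.2.1), p.2.2 + t*(q.2.2-p.2.2)) := by
  obtain ⟨a, b, c⟩ := p; obtain ⟨a', b', c'⟩ := q
  simp [Prod.ext_iff, smul_eq_mul]

lemma joinedIn_of_seg {p q : V3} (h : ∀ t ∈ Icc (0:ℝ) 1, 0 < HH (p + t • (q - p))) :
    JoinedIn PH p q := by
  refine ⟨⟨⟨fun t => p + (t : ℝ) • (q - p), by fun_prop⟩, by simp, ?_⟩, fun t => h t t.2⟩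
  show p + (1:ℝ) • (q - p) = q
  rw [one_smul]; abel

lemma xsinx {x : ℝ} (h : |x| ≤ 1) : 0 ≤ x * Real.sin x := by
  rcases le_or_gt 0 x with hx | hx
  · have : Real.sin x ≥ 0 := Real.sin_nonneg_of_nonneg_of_le_pi hx
      (le_trans (le_trans (le_abs_self x) h) (by linarith [Real.pi_gt_three]))
    positivity
  · have h1 : (0:ℝ) ≤ -x := by linarith
    have : Real.sin (-x) ≥ 0 := Real.sin_nonneg_of_nonneg_of_le_pi h1
      (le_trans (le_trans (neg_le_abs x) h) (by linarith [Real.pi_gt_three]))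
    rw [Real.sin_neg] at this
    nlinarith

lemma xsinx_pos {x : ℝ} (h : |x| ≤ 1) (hx : x ≠ 0) : 0 < x * Real.sin x := by
  rcases lt_or_gt_of_ne hx with hx' | hx'
  · have h1 : (0:ℝ) < -x := by linarith
    have : 0 < Real.sin (-x) := Real.sin_pos_of_pos_of_lt_pi h1
      (lt_of_le_of_lt (le_trans (neg_le_abs x) h) (by linarith [Real.pi_gt_three]))
    rw [Real.sin_neg] at this
    nlinarith
  · have : 0 < Real.sin x := Real.sin_pos_of_pos_of_lt_pi hx'
      (lt_of_le_of_lt (le_trans (le_abs_self x) h) (by linarith [Real.pi_gt_three]))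
    nlinarith

lemma exists_near {x : ℝ} (h : 0 < Real.cos x) : ∃ k : ℤ, |x - 2*π*k| < π/2 := by
  refine ⟨round (x / (2*π)), ?_⟩
  have hπ := Real.pi_pos
  set k := round (x / (2*π)) with hk
  have h1 : |x / (2*π) - k| ≤ 1/2 := abs_sub_round _
  have h2 : |x - 2*π*k| ≤ π := by
    have e : x - 2*π*k = (x/(2*π) - k) * (2*π) := by field_simp
    rw [e, abs_mul, abs_of_pos (by positivity : (0:ℝ) < 2*π)]
    nlinarith
  have hc : Real.cos (x - 2*π*k) = Real.cos x := by
    have e2 : x - 2*π*k = x - k * (2*π) := by ring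
    rw [e2, Real.cos_sub_int_mul_two_pi]
  by_contra hcon
  push_neg at hcon
  have : Real.cos |x - 2*π*k| ≤ 0 := by
    apply Real.cos_nonpos_of_pi_div_two_le_of_le hcon
    linarith
  rw [Real.cos_abs, hc] at this
  linarith

lemma hh_eq (x a b : ℝ) : HH (x, a, b) = Real.cos x * AA (x, a, b) + Real.sin x * BB (x, a, b) := rfl

lemma rr_sq (v : V3) : RR v ^ 2 = AA v ^ 2 + BB v ^ 2 := Real.sq_sqrt (by positivity)

lemma exists_center {v : V3} (hv : 0 < HH v) :
    ∃ c : ℝ, JoinedIn PH v (c, v.2.1, v.2.2) ∧ Cent (c, v.2.1, v.2.2) := by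
  set A := AA v with hA
  set B := BB v with hB
  set R := RR v with hR
  set z : ℂ := ⟨A, B⟩ with hz
  have hzre : z.re = A := rfl
  have hzim : z.im = B := rfl
  have hzne : z ≠ 0 := by
    intro h0
    have hA0 : A = 0 := by rw [← hzre, h0]; rfl
    have hB0 : B = 0 := by rw [← hzim, h0]; rfl
    have : HH v = 0 := by
      rw [show HH v = Real.cos v.1 * A + Real.sin v.1 * B from rfl, hA0, hB0]; ring
    linarith
  have habs : ‖z‖ = R := by
    rw [Complex.norm_def, Complex.normSq_apply, hzre, hzim, hR]
    unfold RR; ring_nf; rfl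
  have hRpos : 0 < R := habs ▸ (norm_pos_iff.mpr hzne)
  set ψ := z.arg with hψ
  have hcosψ : Real.cos ψ * R = A := by
    rw [hψ, Complex.cos_arg hzne, hzre, habs]; field_simp
  have hsinψ : Real.sin ψ * R = B := by
    rw [hψ, Complex.sin_arg, hzim, habs]; field_simp
  have key : ∀ x : ℝ, HH (x, v.2.1, v.2.2) = R * Real.cos (x - ψ) := by
    intro x
    have hAx : AA (x, v.2.1, v.2.2) = A := rfl
    have hBx : BB (x, v.2.1, v.2.2) = B := rfl
    rw [hh_eq, hAx, hBx, Real.cos_sub, ← hcosψ, ← hsinψ]; ring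
  have hveq : HH (v.1, v.2.1, v.2.2) = HH v := rfl
  have hcpos : 0 < Real.cos (v.1 - ψ) := by
    have h1 : 0 < R * Real.cos (v.1 - ψ) := by rw [← key]; rw [hveq]; exact hv
    nlinarith
  obtain ⟨k, hk⟩ := exists_near hcpos
  refine ⟨ψ + 2*π*k, ?_, ?_, ?_, ?_⟩
  · apply joinedIn_of_seg
    intro t ht
    rw [seg_coords]
    simp only []
    have e1 : v.2.1 + t * (v.2.1 - v.2.1) = v.2.1 := by ring
    have e2 : v.2.2 + t * (v.2.2 - v.2.2) = v.2.2 := by ring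
    rw [e1, e2]
    show 0 < HH (v.1 + t * (ψ + 2*π*k - v.1), v.2.1, v.2.2)
    rw [key]
    have e3 : v.1 + t * (ψ + 2*π*k - v.1) - ψ
        = ((1-t) * (v.1 - (ψ + 2*π*k))) + k * (2*π) := by ring
    rw [e3, Real.cos_add_int_mul_two_pi]
    have hb : |(1-t) * (v.1 - (ψ + 2*π*k))| < π/2 := by
      rw [abs_mul]
      have h1t : |1 - t| ≤ 1 := by rw [abs_le]; constructor <;> [linarith [ht.2]; linarith [ht.1]]
      have : |v.1 - (ψ + 2*π*k)| < π/2 := by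
        have : v.1 - (ψ + 2*π*k) = v.1 - ψ - 2*π*k := by ring
        rw [this]; exact hk
      nlinarith [abs_nonneg ((1:ℝ)-t), abs_nonneg (v.1 - (ψ + 2*π*k)), Real.pi_pos]
    have := abs_lt.mp hb
    have := Real.cos_pos_of_mem_Ioo (show (1-t) * (v.1 - (ψ + 2*π*k)) ∈ Ioo (-(π/2)) (π/2) from ⟨by linarith [this.1], this.2⟩)
    positivity
  · show 0 < RR (ψ + 2*π*k, v.2.1, v.2.2)
    exact hRpos
  · show Real.cos (ψ + 2*π*k) * RR (ψ + 2*π*k, v.2.1, v.2.2) = AA (ψ + 2*π*k, v.2.1, v.2.2)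
    have : Real.cos (ψ + 2*π*k) = Real.cos ψ := by
      have e : ψ + 2*π*k = ψ + k * (2*π) := by ring
      rw [e, Real.cos_add_int_mul_two_pi]
    rw [this]; exact hcosψ
  · show Real.sin (ψ + 2*π*k) * RR (ψ + 2*π*k, v.2.1, v.2.2) = BB (ψ + 2*π*k, v.2.1, v.2.2)
    have : Real.sin (ψ + 2*π*k) = Real.sin ψ := by
      have e : ψ + 2*π*k = ψ + k * (2*π) := by ring
      rw [e, Real.sin_add_int_mul_two_pi]
    rw [this]; exact hsinψ

lemma cent_pos {v : V3} (hc : Cent v) : 0 < HH v := by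
  obtain ⟨hR, hA, hB⟩ := hc
  have h1 : HH v * RR v = AA v ^ 2 + BB v ^ 2 := by
    rw [show HH v = Real.cos v.1 * AA v + Real.sin v.1 * BB v from rfl]
    rw [← hA, ← hB]; ring
  have h2 := rr_sq v
  nlinarith

lemma macro_step {v : V3} (hc : Cent v) (w2 w3 : ℝ)
    (hdot : ∀ t ∈ Icc (0:ℝ) 1,
      0 < (Real.cos (v.2.1 + t*(w2 - v.2.1)) * Real.cos (v.2.2 + t*(w3 - v.2.2))) * AA v
        + (Real.sin (v.2.1 + t*(w2 - v.2.1)) * Real.sin (v.2.2 + t*(w3 - v.2.2))) * BB v) :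
    ∃ c : ℝ, JoinedIn PH v (c, w2, w3) ∧ Cent (c, w2, w3) := by
  obtain ⟨hR, hA, hB⟩ := hc
  have hval : ∀ t : ℝ, HH (v.1, v.2.1 + t*(w2 - v.2.1), v.2.2 + t*(w3 - v.2.2)) * RR v
      = (Real.cos (v.2.1 + t*(w2 - v.2.1)) * Real.cos (v.2.2 + t*(w3 - v.2.2))) * AA v
        + (Real.sin (v.2.1 + t*(w2 - v.2.1)) * Real.sin (v.2.2 + t*(w3 - v.2.2))) * BB v := by
    intro t
    rw [show HH (v.1, v.2.1 + t*(w2 - v.2.1), v.2.2 + t*(w3 - v.2.2))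
        = Real.cos v.1 * (Real.cos (v.2.1 + t*(w2 - v.2.1)) * Real.cos (v.2.2 + t*(w3 - v.2.2)))
          + Real.sin v.1 * (Real.sin (v.2.1 + t*(w2 - v.2.1)) * Real.sin (v.2.2 + t*(w3 - v.2.2))) from rfl]
    rw [← hA, ← hB]; ring
  have hpos : ∀ t ∈ Icc (0:ℝ) 1, 0 < HH (v.1, v.2.1 + t*(w2 - v.2.1), v.2.2 + t*(w3 - v.2.2)) := by
    intro t ht
    have h1 := hval t
    have h2 := hdot t ht
    nlinarith
  have hseg : JoinedIn PH v (v.1, w2, w3) := by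
    apply joinedIn_of_seg
    intro t ht
    rw [seg_coords]
    have e1 : v.1 + t * (v.1 - v.1) = v.1 := by ring
    rw [e1]
    exact hpos t ht
  have hend : 0 < HH (v.1, w2, w3) := by
    have := hpos 1 ⟨by norm_num, le_refl 1⟩
    simpa using this
  obtain ⟨c, hj, hcent⟩ := exists_center hend
  exact ⟨c, hseg.trans hj, hcent⟩

lemma dot_id (θ a b : ℝ) :
    Real.cos θ ^ 2 * (Real.cos a * Real.cos b) + Real.sin θ ^ 2 * (Real.sin a * Real.sin b)
      = (Real.cos (a - b) + Real.cos (2*θ) * Real.cos (a + b)) / 2 := by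
  rw [Real.cos_sub, Real.cos_add, Real.cos_two_mul, Real.sin_sq]; ring

def delb (b : ℝ) : ℝ := Real.arccos |Real.cos (2*b)| / 2

lemma delb_facts {b : ℝ} (h2 : Real.cos b ≠ 0) (h3 : Real.sin b ≠ 0) :
    0 < delb b ∧ delb b ≤ π ∧ |Real.cos (2*b)| < Real.cos (delb b) := by
  set κ := |Real.cos (2*b)| with hκ
  have hκ0 : 0 ≤ κ := abs_nonneg _
  have hκ1 : κ < 1 := by
    have hs : Real.sin (2*b) ≠ 0 := by
      rw [Real.sin_two_mul]; exact mul_ne_zero (mul_ne_zero two_ne_zero h3) h2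
    have h1 := Real.sin_sq_add_cos_sq (2*b)
    have h2' : 0 < Real.sin (2*b) ^ 2 := by positivity
    nlinarith [sq_abs (Real.cos (2*b))]
  have harc0 : 0 < Real.arccos κ := Real.arccos_pos.mpr hκ1
  have harcπ : Real.arccos κ ≤ π := Real.arccos_le_pi κ
  refine ⟨by unfold delb; linarith, by unfold delb; linarith, ?_⟩
  have hlt : Real.cos (Real.arccos κ) < Real.cos (delb b) := by
    apply Real.strictAntiOn_cos ⟨by unfold delb; linarith, by unfold delb; linarith⟩
      ⟨by linarith, harcπ⟩
    unfold delb; linarith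
  rwa [Real.cos_arccos (by linarith) (by linarith)] at hlt

lemma dot_lb {θ a b δ : ℝ} (hδπ : δ ≤ π) (hab : |a - b| ≤ δ) (hκ : |Real.cos (2*θ)| < Real.cos δ) :
    0 < Real.cos θ ^ 2 * (Real.cos a * Real.cos b) + Real.sin θ ^ 2 * (Real.sin a * Real.sin b) := by
  rw [dot_id]
  have h1 : Real.cos δ ≤ Real.cos (a - b) := by
    rw [← Real.cos_abs (a-b)]
    exact Real.cos_le_cos_of_nonneg_of_le_pi (abs_nonneg _) hδπ hab
  have h2 : |Real.cos (2*θ) * Real.cos (a+b)| ≤ |Real.cos (2*θ)| := by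
    rw [abs_mul]
    nlinarith [Real.abs_cos_le_one (a+b), abs_nonneg (Real.cos (2*θ))]
  have h3 := neg_abs_le (Real.cos (2*θ) * Real.cos (a+b))
  linarith [abs_nonneg (Real.cos (2*θ))]

lemma prod_eta (v : V3) : (v.1, v.2.1, v.2.2) = v := rfl

lemma clamp_abs {x δ : ℝ} (hδ : 0 < δ) : |max (-δ) (min δ x)| ≤ δ := by
  rw [abs_le]
  constructor
  · exact le_max_left _ _
  · exact max_le (by linarith) (min_le_left _ _)

lemma clamp_remainder {x δ : ℝ} (hδ : 0 < δ) {n : ℕ} (h : |x| ≤ (n+1) * δ) :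
    |x - max (-δ) (min δ x)| ≤ n * δ := by
  rcases le_or_gt x δ with hle | hgt
  · rcases le_or_gt (-δ) x with hge | hlt
    · rw [min_eq_right hle, max_eq_right hge]
      simpa using by positivity
    · rw [min_eq_right hle, max_eq_left (by linarith)]
      rw [abs_le] at h ⊢
      constructor <;> [linarith [h.1]; linarith [h.1, h.2]]
  · rw [min_eq_left (by linarith), max_eq_right (by linarith)]
    rw [abs_le] at h ⊢
    constructor <;> [linarith [h.1, h.2]; linarith [h.2]]

lemma horiz_aux {b : ℝ} (h2 : Real.cos b ≠ 0) (h3 : Real.sin b ≠ 0) :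
    ∀ n : ℕ, ∀ v : V3, v.2.2 = b → Cent v → ∀ w2 : ℝ, |w2 - v.2.1| ≤ n * delb b →
      ∃ c : ℝ, JoinedIn PH v (c, w2, b) ∧ Cent (c, w2, b) := by
  obtain ⟨hδ0, hδπ, hκ⟩ := delb_facts h2 h3
  intro n
  induction n with
  | zero =>
    intro v hvb hc w2 hw
    simp only [Nat.cast_zero, zero_mul] at hw
    have : w2 = v.2.1 := by
      have := abs_nonneg (w2 - v.2.1); have h0 : |w2 - v.2.1| = 0 := le_antisymm hw this
      have := abs_eq_zero.mp h0; linarith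
    refine ⟨v.1, ?_, ?_⟩
    · rw [this, ← hvb, prod_eta]; exact JoinedIn.refl (cent_pos hc)
    · rw [this, ← hvb, prod_eta]; exact hc
  | succ n ih =>
    intro v hvb hc w2 hw
    set m2 := v.2.1 + max (-delb b) (min (delb b) (w2 - v.2.1)) with hm2
    have hstep : |m2 - v.2.1| ≤ delb b := by
      rw [hm2]; simpa using clamp_abs hδ0
    have hrem : |w2 - m2| ≤ n * delb b := by
      rw [hm2]
      have := clamp_remainder hδ0 (x := w2 - v.2.1) (n := n) (by push_cast at hw ⊢; linarith)
      convert this using 2; ring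
    obtain ⟨c, hj, hcent⟩ := macro_step hc m2 b (by
      intro t ht
      have e3 : v.2.2 + t * (b - v.2.2) = b := by rw [hvb]; ring
      rw [e3]
      set a := v.2.1 + t * (m2 - v.2.1) with ha
      have hab : |a - v.2.1| ≤ delb b := by
        rw [ha]
        have : v.2.1 + t * (m2 - v.2.1) - v.2.1 = t * (m2 - v.2.1) := by ring
        rw [this, abs_mul, abs_of_nonneg ht.1]
        nlinarith [ht.2, abs_nonneg (m2 - v.2.1)]
      have := dot_lb (θ := b) (a := a) (b := v.2.1) hδπ hab hκ
      rw [show AA v = Real.cos v.2.1 * Real.cos b from by rw [show AA v = Real.cos v.2.1 * Real.cos v.2.2 from rfl, hvb],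
          show BB v = Real.sin v.2.1 * Real.sin b from by rw [show BB v = Real.sin v.2.1 * Real.sin v.2.2 from rfl, hvb]]
      nlinarith [this])
    obtain ⟨c', hj', hcent'⟩ := ih (c, m2, b) rfl hcent w2 (by simpa using hrem)
    exact ⟨c', hj.trans hj', hcent'⟩

lemma horiz_travel {v : V3} (hc : Cent v) (h2 : Real.cos v.2.2 ≠ 0) (h3 : Real.sin v.2.2 ≠ 0)
    (w2 : ℝ) : ∃ c : ℝ, JoinedIn PH v (c, w2, v.2.2) ∧ Cent (c, w2, v.2.2) := by
  obtain ⟨hδ0, hδπ, hκ⟩ := delb_facts h2 h3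
  obtain ⟨n, hn⟩ := exists_nat_ge (|w2 - v.2.1| / delb v.2.2)
  exact horiz_aux h2 h3 n v rfl hc w2 (by rw [div_le_iff₀ hδ0] at hn; linarith)

lemma vert_aux {a : ℝ} (h2 : Real.cos a ≠ 0) (h3 : Real.sin a ≠ 0) :
    ∀ n : ℕ, ∀ v : V3, v.2.1 = a → Cent v → ∀ w3 : ℝ, |w3 - v.2.2| ≤ n * delb a →
      ∃ c : ℝ, JoinedIn PH v (c, a, w3) ∧ Cent (c, a, w3) := by
  obtain ⟨hδ0, hδπ, hκ⟩ := delb_facts h2 h3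
  intro n
  induction n with
  | zero =>
    intro v hva hc w3 hw
    simp only [Nat.cast_zero, zero_mul] at hw
    have : w3 = v.2.2 := by
      have := abs_nonneg (w3 - v.2.2); have h0 : |w3 - v.2.2| = 0 := le_antisymm hw this
      have := abs_eq_zero.mp h0; linarith
    refine ⟨v.1, ?_, ?_⟩
    · rw [this, ← hva, prod_eta]; exact JoinedIn.refl (cent_pos hc)
    · rw [this, ← hva, prod_eta]; exact hc
  | succ n ih =>
    intro v hva hc w3 hw
    set m3 := v.2.2 + max (-delb a) (min (delb a) (w3 - v.2.2)) with hm3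
    have hrem : |w3 - m3| ≤ n * delb a := by
      rw [hm3]
      have := clamp_remainder hδ0 (x := w3 - v.2.2) (n := n) (by push_cast at hw ⊢; linarith)
      convert this using 2; ring
    obtain ⟨c, hj, hcent⟩ := macro_step hc a m3 (by
      intro t ht
      have e3 : v.2.1 + t * (a - v.2.1) = a := by rw [hva]; ring
      rw [e3]
      set u := v.2.2 + t * (m3 - v.2.2) with hu
      have hab : |u - v.2.2| ≤ delb a := by
        rw [hu]
        have e4 : v.2.2 + t * (m3 - v.2.2) - v.2.2 = t * (m3 - v.2.2) := by ring
        rw [e4, abs_mul, abs_of_nonneg ht.1]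
        have hstep : |m3 - v.2.2| ≤ delb a := by rw [hm3]; simpa using clamp_abs hδ0
        nlinarith [ht.2, abs_nonneg (m3 - v.2.2)]
      have := dot_lb (θ := a) (a := u) (b := v.2.2) hδπ hab hκ
      rw [show AA v = Real.cos a * Real.cos v.2.2 from by
            rw [show AA v = Real.cos v.2.1 * Real.cos v.2.2 from rfl, hva],
          show BB v = Real.sin a * Real.sin v.2.2 from by
            rw [show BB v = Real.sin v.2.1 * Real.sin v.2.2 from rfl, hva]]
      nlinarith [this])
    obtain ⟨c', hj', hcent'⟩ := ih (c, a, m3) rfl hcent w3 (by simpa using hrem)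
    exact ⟨c', hj.trans hj', hcent'⟩

lemma vert_travel {v : V3} (hc : Cent v) (h2 : Real.cos v.2.1 ≠ 0) (h3 : Real.sin v.2.1 ≠ 0)
    (w3 : ℝ) : ∃ c : ℝ, JoinedIn PH v (c, v.2.1, w3) ∧ Cent (c, v.2.1, w3) := by
  obtain ⟨hδ0, hδπ, hκ⟩ := delb_facts h2 h3
  obtain ⟨n, hn⟩ := exists_nat_ge (|w3 - v.2.2| / delb v.2.1)
  exact vert_aux h2 h3 n v rfl hc w3 (by rw [div_le_iff₀ hδ0] at hn; linarith)

lemma base2_bounds : 0 < π/2 - 1 ∧ π/2 - 1 < π/2 := by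
  constructor <;> nlinarith [Real.pi_gt_three]

lemma cos_base2_pos : 0 < Real.cos (π/2 - 1) := by
  apply Real.cos_pos_of_mem_Ioo
  constructor <;> nlinarith [Real.pi_gt_three, Real.pi_pos]

lemma sin_base2_pos : 0 < Real.sin (π/2 - 1) := by
  apply Real.sin_pos_of_pos_of_lt_pi
  · nlinarith [Real.pi_gt_three]
  · nlinarith [Real.pi_pos]

lemma reach_clean {v : V3} (hc : Cent v) (h2 : Real.cos v.2.2 ≠ 0) (h3 : Real.sin v.2.2 ≠ 0) :
    ∃ k : ℤ, JoinedIn PH v (2*π*k, π/2 - 1, 0) := by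
  obtain ⟨c, hj1, hc1⟩ := horiz_travel hc h2 h3 (π/2 - 1)
  obtain ⟨c', hj2, hc2⟩ := vert_travel hc1 (ne_of_gt cos_base2_pos) (ne_of_gt sin_base2_pos) 0
  -- at (c', π/2 - 1, 0) : A = cos (π/2-1), B = 0
  have hA : AA (c', π/2 - 1, 0) = Real.cos (π/2 - 1) := by
    rw [show AA (c', π/2 - 1, 0) = Real.cos (π/2-1) * Real.cos 0 from rfl, Real.cos_zero]; ring
  have hB : BB (c', π/2 - 1, 0) = 0 := by
    rw [show BB (c', π/2 - 1, 0) = Real.sin (π/2-1) * Real.sin 0 from rfl, Real.sin_zero]; ring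
  obtain ⟨hR, hcA, _⟩ := hc2
  have hRA : RR (c', π/2 - 1, 0) = Real.cos (π/2 - 1) := by
    have h1 := rr_sq (c', π/2 - 1, 0)
    rw [hA, hB] at h1
    have h2' : (RR (c', π/2 - 1, 0) - Real.cos (π/2-1)) * (RR (c', π/2 - 1, 0) + Real.cos (π/2-1)) = 0 := by
      nlinarith
    rcases mul_eq_zero.mp h2' with h | h
    · linarith
    · nlinarith [cos_base2_pos]
  have hcos1 : Real.cos c' = 1 := by
    rw [hRA, hA] at hcA
    have h1 : Real.cos c' * Real.cos (π/2-1) = 1 * Real.cos (π/2-1) := by rw [one_mul]; exact hcA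
    exact mul_right_cancel₀ (ne_of_gt cos_base2_pos) h1
  obtain ⟨n, hn⟩ := (Real.cos_eq_one_iff c').mp hcos1
  refine ⟨n, ?_⟩
  have : (2*π*n : ℝ) = c' := by rw [← hn]; ring
  rw [this]
  exact (hj1.trans hj2)

lemma reach {v : V3} (hv : 0 < HH v) : ∃ k : ℤ, JoinedIn PH v (2*π*k, π/2 - 1, 0) := by
  obtain ⟨c, hj, hc⟩ := exists_center hv
  set v' : V3 := (c, v.2.1, v.2.2) with hv'
  have h21 : v'.2.1 = v.2.1 := rfl
  have h22 : v'.2.2 = v.2.2 := rfl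
  have hAB : AA v' = Real.cos v.2.1 * Real.cos v.2.2 := rfl
  have hBB : BB v' = Real.sin v.2.1 * Real.sin v.2.2 := rfl
  have hquarter : ∀ t ∈ Icc (0:ℝ) 1, 0 < Real.cos (t * (π/4)) := by
    intro t ht
    apply Real.cos_pos_of_mem_Ioo
    constructor
    · nlinarith [Real.pi_pos, ht.1, ht.2]
    · nlinarith [Real.pi_pos, ht.1, ht.2]
  by_cases hs : Real.sin v.2.2 = 0
  · -- B = 0, A ≠ 0
    have hB0 : BB v' = 0 := by rw [hBB, hs]; ring
    have hAne : AA v' ≠ 0 := by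
      intro h0
      have h1 := rr_sq v'
      rw [h0, hB0] at h1
      have := hc.1
      nlinarith
    have hc2 : Real.cos v.2.1 ≠ 0 := fun h => hAne (by rw [hAB, h]; ring)
    have hc3 : Real.cos v.2.2 ≠ 0 := fun h => hAne (by rw [hAB, h]; ring)
    obtain ⟨c₂, hj2, hcent2⟩ := macro_step hc (v.2.1) (v.2.2 + π/4) (by
      intro t ht
      have e1 : v'.2.1 + t * (v.2.1 - v'.2.1) = v.2.1 := by rw [h21]; ring
      have e2 : v'.2.2 + t * (v.2.2 + π/4 - v'.2.2) = v.2.2 + t * (π/4) := by rw [h22]; ring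
      rw [e1, e2, hAB, hBB, hs]
      have e3 : Real.cos (v.2.2 + t * (π/4))
          = Real.cos v.2.2 * Real.cos (t * (π/4)) := by
        rw [Real.cos_add, hs]; ring
      rw [e3]
      have hq := hquarter t ht
      have h4 : (0:ℝ) < Real.cos v.2.1 ^ 2 := by positivity
      have h5 : (0:ℝ) < Real.cos v.2.2 ^ 2 := by positivity
      have key : Real.cos v.2.1 * (Real.cos v.2.2 * Real.cos (t * (π/4))) * (Real.cos v.2.1 * Real.cos v.2.2)
          + Real.sin v.2.1 * Real.sin (v.2.2 + t * (π/4)) * (Real.sin v.2.1 * 0)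
          = (Real.cos v.2.1)^2 * ((Real.cos v.2.2)^2 * Real.cos (t * (π/4))) := by ring
      rw [key]
      exact mul_pos h4 (mul_pos h5 hq))
    have hrow2 : Real.cos ((c₂, v.2.1, v.2.2 + π/4) : V3).2.2 ≠ 0 := by
      show Real.cos (v.2.2 + π/4) ≠ 0
      rw [Real.cos_add, hs]
      simp [Real.cos_pi_div_four]
      intro h; exact hc3 h
    have hrow3 : Real.sin ((c₂, v.2.1, v.2.2 + π/4) : V3).2.2 ≠ 0 := by
      show Real.sin (v.2.2 + π/4) ≠ 0
      rw [Real.sin_add, hs]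
      simp [Real.sin_pi_div_four]
      intro h; exact hc3 h
    obtain ⟨k, hj3⟩ := reach_clean hcent2 hrow2 hrow3
    exact ⟨k, (hj.trans hj2).trans hj3⟩
  · by_cases hcc : Real.cos v.2.2 = 0
    · -- A = 0, B ≠ 0
      have hA0 : AA v' = 0 := by rw [hAB, hcc]; ring
      have hBne : BB v' ≠ 0 := by
        intro h0
        have h1 := rr_sq v'
        rw [h0, hA0] at h1
        have := hc.1
        nlinarith
      have hs2 : Real.sin v.2.1 ≠ 0 := fun h => hBne (by rw [hBB, h]; ring)
      obtain ⟨c₂, hj2, hcent2⟩ := macro_step hc (v.2.1) (v.2.2 + π/4) (by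
        intro t ht
        have e1 : v'.2.1 + t * (v.2.1 - v'.2.1) = v.2.1 := by rw [h21]; ring
        have e2 : v'.2.2 + t * (v.2.2 + π/4 - v'.2.2) = v.2.2 + t * (π/4) := by rw [h22]; ring
        rw [e1, e2, hAB, hBB, hcc]
        have e3 : Real.sin (v.2.2 + t * (π/4))
            = Real.sin v.2.2 * Real.cos (t * (π/4)) := by
          rw [Real.sin_add, hcc]; ring
        rw [e3]
        have hq := hquarter t ht
        have h4 : (0:ℝ) < Real.sin v.2.1 ^ 2 := by positivity
        have h5 : (0:ℝ) < Real.sin v.2.2 ^ 2 := by positivity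
        have key : Real.cos v.2.1 * Real.cos (v.2.2 + t * (π/4)) * (Real.cos v.2.1 * 0)
            + Real.sin v.2.1 * (Real.sin v.2.2 * Real.cos (t * (π/4))) * (Real.sin v.2.1 * Real.sin v.2.2)
            = (Real.sin v.2.1)^2 * ((Real.sin v.2.2)^2 * Real.cos (t * (π/4))) := by ring
        rw [key]
        exact mul_pos h4 (mul_pos h5 hq))
      have hrow2 : Real.cos ((c₂, v.2.1, v.2.2 + π/4) : V3).2.2 ≠ 0 := by
        show Real.cos (v.2.2 + π/4) ≠ 0
        rw [Real.cos_add, hcc]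
        simp [Real.sin_pi_div_four]
        intro h; exact hs h
      have hrow3 : Real.sin ((c₂, v.2.1, v.2.2 + π/4) : V3).2.2 ≠ 0 := by
        show Real.sin (v.2.2 + π/4) ≠ 0
        rw [Real.sin_add, hcc]
        simp [Real.cos_pi_div_four]
        intro h; exact hs h
      obtain ⟨k, hj3⟩ := reach_clean hcent2 hrow2 hrow3
      exact ⟨k, (hj.trans hj2).trans hj3⟩
    · obtain ⟨k, hj3⟩ := reach_clean hc (show Real.cos v'.2.2 ≠ 0 from hcc)
        (show Real.sin v'.2.2 ≠ 0 from hs)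
      exact ⟨k, hj.trans hj3⟩

lemma W1pos (φ : ℝ) : 0 < HH (φ, π/2 - Real.cos φ, Real.sin φ) := by
  have hexp : HH (φ, π/2 - Real.cos φ, Real.sin φ)
      = Real.cos φ * (Real.cos (π/2 - Real.cos φ) * Real.cos (Real.sin φ))
        + Real.sin φ * (Real.sin (π/2 - Real.cos φ) * Real.sin (Real.sin φ)) := rfl
  rw [hexp, Real.cos_pi_div_two_sub, Real.sin_pi_div_two_sub]
  set a := Real.cos φ with hA
  set b := Real.sin φ with hb
  have ha1 : |a| ≤ 1 := Real.abs_cos_le_one φ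
  have hb1 : |b| ≤ 1 := Real.abs_sin_le_one φ
  have hab : a^2 + b^2 = 1 := by rw [hA, hb]; nlinarith [Real.sin_sq_add_cos_sq φ]
  have hca : 0 < Real.cos a := Real.cos_pos_of_mem_Ioo
    ⟨by nlinarith [abs_le.mp ha1, Real.pi_gt_three], by nlinarith [abs_le.mp ha1, Real.pi_gt_three]⟩
  have hcb : 0 < Real.cos b := Real.cos_pos_of_mem_Ioo
    ⟨by nlinarith [abs_le.mp hb1, Real.pi_gt_three], by nlinarith [abs_le.mp hb1, Real.pi_gt_three]⟩
  by_cases hza : a = 0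
  · have hfac : (b - 1) * (b + 1) = 0 := by nlinarith
    have hbs : b * Real.sin b = Real.sin 1 := by
      rcases mul_eq_zero.mp hfac with h | h
      · have : b = 1 := by linarith
        rw [this]; ring
      · have : b = -1 := by linarith
        rw [this, Real.sin_neg]; ring
    have hs1 : 0 < Real.sin 1 :=
      Real.sin_pos_of_pos_of_lt_pi one_pos (by nlinarith [Real.pi_gt_three])
    rw [hza]
    simp only [Real.cos_zero, zero_mul, zero_add, one_mul]
    nlinarith
  · have h1 := mul_pos (xsinx_pos ha1 hza) hcb
    have h2 := mul_nonneg (xsinx hb1) (le_of_lt hca)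
    nlinarith

lemma hh_shift1 (k : ℤ) (v : V3) : HH (v.1 + 2*π*k, v.2.1, v.2.2) = HH v := by
  have e : v.1 + 2*π*k = v.1 + k * (2*π) := by ring
  show Real.cos (v.1 + 2*π*k) * AA v + Real.sin (v.1 + 2*π*k) * BB v
      = Real.cos v.1 * AA v + Real.sin v.1 * BB v
  rw [e, Real.cos_add_int_mul_two_pi, Real.sin_add_int_mul_two_pi]

lemma shift1_joined {u w : V3} (k : ℤ) (h : JoinedIn PH u w) :
    JoinedIn PH (u.1 + 2*π*k, u.2.1, u.2.2) (w.1 + 2*π*k, w.2.1, w.2.2) := by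
  obtain ⟨γ, hγ⟩ := h
  refine ⟨γ.map (f := fun v : V3 => (v.1 + 2*π*k, v.2.1, v.2.2)) (by fun_prop), fun t => ?_⟩
  show (0:ℝ) < HH ((γ t).1 + 2*π*k, (γ t).2.1, (γ t).2.2)
  rw [hh_shift1]
  exact hγ t

lemma base_pos : ((0:ℝ), π/2 - 1, (0:ℝ)) ∈ PH := by
  show 0 < HH ((0:ℝ), π/2 - 1, (0:ℝ))
  show 0 < Real.cos 0 * (Real.cos (π/2-1) * Real.cos 0) + Real.sin 0 * (Real.sin (π/2-1) * Real.sin 0)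
  simp [Real.cos_zero, Real.sin_zero]
  exact cos_base2_pos

lemma loop1 : JoinedIn PH ((0:ℝ), π/2 - 1, (0:ℝ)) ((2*π : ℝ), π/2 - 1, (0:ℝ)) := by
  have hcont : Continuous (fun t : ℝ => ((2*π*t : ℝ), π/2 - Real.cos (2*π*t), Real.sin (2*π*t))) := by
    fun_prop
  refine ⟨⟨⟨fun t => ((2*π*(t:ℝ) : ℝ), π/2 - Real.cos (2*π*(t:ℝ)), Real.sin (2*π*(t:ℝ))), by fun_prop⟩,
    ?_, ?_⟩, fun t => W1pos _⟩
  · show ((2*π*(0:ℝ) : ℝ), π/2 - Real.cos (2*π*(0:ℝ)), Real.sin (2*π*(0:ℝ)))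
        = ((0:ℝ), π/2 - 1, (0:ℝ))
    norm_num
  · show ((2*π*(1:ℝ) : ℝ), π/2 - Real.cos (2*π*(1:ℝ)), Real.sin (2*π*(1:ℝ)))
        = ((2*π : ℝ), π/2 - 1, (0:ℝ))
    norm_num [Real.cos_two_pi, Real.sin_two_pi]

lemma cl (k : ℤ) : JoinedIn PH ((0:ℝ), π/2-1, (0:ℝ)) ((2*π*k : ℝ), π/2-1, (0:ℝ)) := by
  induction k using Int.induction_on with
  | zero => simpa using JoinedIn.refl base_pos
  | succ i ih =>
    have hs := shift1_joined (u := ((0:ℝ), π/2-1, (0:ℝ))) (w := ((2*π:ℝ), π/2-1, (0:ℝ))) i loop1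
    have e0 : ((0:ℝ) + 2*π*(i:ℤ), π/2-1, (0:ℝ)) = ((2*π*(i:ℤ) : ℝ), π/2-1, (0:ℝ)) := by norm_num
    have e1 : ((2*π:ℝ) + 2*π*(i:ℤ), π/2-1, (0:ℝ)) = ((2*π*((i:ℤ)+1:ℤ) : ℝ), π/2-1, (0:ℝ)) := by
      push_cast; norm_num; ring
    rw [e0, e1] at hs
    exact (ih.trans (by exact_mod_cast hs))
  | pred i ih =>
    have hs := shift1_joined (u := ((0:ℝ), π/2-1, (0:ℝ))) (w := ((2*π:ℝ), π/2-1, (0:ℝ))) (-i-1) loop1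
    have e0 : ((0:ℝ) + 2*π*((-i-1:ℤ)), π/2-1, (0:ℝ)) = ((2*π*((-i-1:ℤ)) : ℝ), π/2-1, (0:ℝ)) := by
      norm_num
    have e1 : ((2*π:ℝ) + 2*π*((-i-1:ℤ)), π/2-1, (0:ℝ)) = ((2*π*((-i:ℤ)) : ℝ), π/2-1, (0:ℝ)) := by
      push_cast; ring_nf
    rw [e0, e1] at hs
    have : JoinedIn PH ((2*π*((-i:ℤ)) : ℝ), π/2-1, (0:ℝ)) ((2*π*((-i-1:ℤ)) : ℝ), π/2-1, (0:ℝ)) :=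
      hs.symm
    exact (by exact_mod_cast ih : JoinedIn PH ((0:ℝ), π/2-1, (0:ℝ)) ((2*π*((-i:ℤ)):ℝ), π/2-1, (0:ℝ))).trans this

def q3 : V3 → T3 := fun y => ((y.1 : AddCircle (2*π)), (y.2.1 : AddCircle (2*π)), (y.2.2 : AddCircle (2*π)))

lemma q3_continuous : Continuous q3 := by
  unfold q3
  exact ((AddCircle.continuous_mk' _).comp continuous_fst).prodMk
    (((AddCircle.continuous_mk' _).comp (continuous_fst.comp continuous_snd)).prodMk
      ((AddCircle.continuous_mk' _).comp (continuous_snd.comp continuous_snd)))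

lemma q3_surjective : Function.Surjective q3 := by
  intro p
  obtain ⟨x1, hx1⟩ := Quotient.exists_rep p.1
  obtain ⟨x2, hx2⟩ := Quotient.exists_rep p.2.1
  obtain ⟨x3, hx3⟩ := Quotient.exists_rep p.2.2
  exact ⟨(x1, x2, x3), by simp [q3, hx1, hx2, hx3]⟩

lemma joined_map {X Y : Type*} [TopologicalSpace X] [TopologicalSpace Y] {S : Set X} {T : Set Y}
    {x y : X} (h : JoinedIn S x y) {f : X → Y} (hf : Continuous f) (hT : ∀ w ∈ S, f w ∈ T) :
    JoinedIn T (f x) (f y) := by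
  obtain ⟨γ, hγ⟩ := h
  exact ⟨γ.map hf, fun t => hT _ (hγ t)⟩

lemma master (α d : V3) (h1 : α.1 ≠ 0) (h2 : α.2.1 ≠ 0) (h3 : α.2.2 ≠ 0)
    (Fv : T3 → ℝ)
    (hF : ∀ y : V3, Fv (q3 y) = HH (α.1*y.1 + d.1, α.2.1*y.2.1 + d.2.1, α.2.2*y.2.2 + d.2.2)) :
    IsPathConnected {p : T3 | 0 < Fv p} := by
  set e : V3 → V3 := fun y => (α.1*y.1 + d.1, α.2.1*y.2.1 + d.2.1, α.2.2*y.2.2 + d.2.2) with he'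
  set einv : V3 → V3 := fun v => ((v.1 - d.1)/α.1, (v.2.1 - d.2.1)/α.2.1, (v.2.2 - d.2.2)/α.2.2)
    with heinv'
  have he : ∀ v, e (einv v) = v := by
    intro v
    show (α.1*((v.1 - d.1)/α.1) + d.1, α.2.1*((v.2.1 - d.2.1)/α.2.1) + d.2.1,
      α.2.2*((v.2.2 - d.2.2)/α.2.2) + d.2.2) = v
    have c1 : α.1*((v.1 - d.1)/α.1) + d.1 = v.1 := by field_simp; ring
    have c2 : α.2.1*((v.2.1 - d.2.1)/α.2.1) + d.2.1 = v.2.1 := by field_simp; ring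
    have c3 : α.2.2*((v.2.2 - d.2.2)/α.2.2) + d.2.2 = v.2.2 := by field_simp; ring
    rw [c1, c2, c3]
  have hei : ∀ y, einv (e y) = y := by
    intro y
    show ((α.1*y.1 + d.1 - d.1)/α.1, (α.2.1*y.2.1 + d.2.1 - d.2.1)/α.2.1,
      (α.2.2*y.2.2 + d.2.2 - d.2.2)/α.2.2) = y
    have c1 : (α.1*y.1 + d.1 - d.1)/α.1 = y.1 := by field_simp; ring
    have c2 : (α.2.1*y.2.1 + d.2.1 - d.2.1)/α.2.1 = y.2.1 := by field_simp; ring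
    have c3 : (α.2.2*y.2.2 + d.2.2 - d.2.2)/α.2.2 = y.2.2 := by field_simp; ring
    rw [c1, c2, c3]
  have heinv_cont : Continuous einv := by
    rw [heinv']
    fun_prop
  have hFq : ∀ y : V3, Fv (q3 y) = HH (e y) := hF
  have transfer : ∀ u w : V3, JoinedIn PH u w →
      JoinedIn {p : T3 | 0 < Fv p} (q3 (einv u)) (q3 (einv w)) := by
    intro u w h
    have hmid : JoinedIn {y : V3 | 0 < HH (e y)} (einv u) (einv w) := by
      apply joined_map h heinv_cont
      intro z hz
      show 0 < HH (e (einv z))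
      rw [he]
      exact hz
    exact joined_map hmid q3_continuous (fun y hy => by
      show 0 < Fv (q3 y); rw [hFq]; exact hy)
  set b : V3 := ((0:ℝ), π/2-1, (0:ℝ)) with hb
  set p0 : T3 := q3 (einv b) with hp0'
  have hp0 : 0 < Fv p0 := by
    rw [hp0', hFq, he]
    exact base_pos
  refine ⟨p0, hp0, ?_⟩
  intro p hp
  obtain ⟨y, hy⟩ := q3_surjective p
  have hHy : 0 < HH (e y) := by rw [← hFq, hy]; exact hp
  obtain ⟨k, hk⟩ := reach hHy
  have step1 : JoinedIn {p : T3 | 0 < Fv p} (q3 (einv (e y))) (q3 (einv ((2*π*k:ℝ), π/2-1, 0))) :=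
    transfer _ _ hk
  rw [hei, hy] at step1
  have step2 : JoinedIn {p : T3 | 0 < Fv p} (q3 (einv b)) (q3 (einv ((2*π*k:ℝ), π/2-1, 0))) :=
    transfer _ _ (cl k)
  exact step2.trans step1.symm

lemma cosT_coe (m : ℕ) (x : ℝ) : cosT m ((x : ℝ) : AddCircle (2*π)) = Real.cos (m * x) :=
  Function.Periodic.lift_coe _ _

lemma sinT_coe (m : ℕ) (x : ℝ) : sinT m ((x : ℝ) : AddCircle (2*π)) = Real.sin (m * x) :=
  Function.Periodic.lift_coe _ _

lemma fT_zero (m : ℕ) : fT 0 m = sinT m := by simp [fT]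
lemma fT_one (m : ℕ) : fT 1 m = cosT m := by simp [fT]
lemma fin_sub_zero : (1 - 0 : Fin 2) = 1 := by decide
lemma fin_sub_one : (1 - 1 : Fin 2) = 0 := by decide

lemma coord_repr (j : Fin 2) (m : ℕ) (hm : 0 < m) : ∃ a dd : ℝ, a ≠ 0 ∧ ∀ x : ℝ,
    fT j m ((x : ℝ) : AddCircle (2*π)) = Real.cos (a*x + dd) ∧
    fT (1 - j) m ((x : ℝ) : AddCircle (2*π)) = Real.sin (a*x + dd) := by
  have hmne : (m : ℝ) ≠ 0 := Nat.cast_ne_zero.mpr hm.ne'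
  fin_cases j <;> simp only [Fin.zero_eta, Fin.mk_one]
  · -- j = 0 : a = -m, dd = π/2
    refine ⟨-(m:ℝ), π/2, by simpa using hmne, fun x => ?_⟩
    rw [show ((1:Fin 2) - 0) = 1 from fin_sub_zero, fT_zero, fT_one, cosT_coe, sinT_coe]
    constructor
    · rw [show -(m:ℝ)*x + π/2 = π/2 - m*x by ring, Real.cos_pi_div_two_sub]
    · rw [show -(m:ℝ)*x + π/2 = π/2 - m*x by ring, Real.sin_pi_div_two_sub]
  · -- j = 1 : a = m, dd = 0
    refine ⟨(m:ℝ), 0, hmne, fun x => ?_⟩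
    rw [show ((1:Fin 2) - 1) = 0 from fin_sub_one, fT_zero, fT_one, cosT_coe, sinT_coe]
    constructor <;> rw [show (m:ℝ)*x + 0 = m*x by ring]

lemma coord1_repr (j : Fin 2) (m : ℕ) (hm : 0 < m) (ε : ℝ) (hε : ε = 1 ∨ ε = -1) :
    ∃ a dd : ℝ, a ≠ 0 ∧ ∀ x : ℝ,
    fT j m ((x : ℝ) : AddCircle (2*π)) = Real.cos (a*x + dd) ∧
    ε * fT (1 - j) m ((x : ℝ) : AddCircle (2*π)) = Real.sin (a*x + dd) := by
  have hmne : (m : ℝ) ≠ 0 := Nat.cast_ne_zero.mpr hm.ne'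
  rcases hε with hε | hε
  · obtain ⟨a, dd, ha, h⟩ := coord_repr j m hm
    exact ⟨a, dd, ha, fun x => ⟨(h x).1, by rw [hε, one_mul]; exact (h x).2⟩⟩
  · fin_cases j <;> simp only [Fin.zero_eta, Fin.mk_one]
    · -- j = 0, ε = -1 : a = m, dd = -π/2
      refine ⟨(m:ℝ), -(π/2), hmne, fun x => ?_⟩
      rw [show ((1:Fin 2) - 0) = 1 from fin_sub_zero, fT_zero, fT_one, cosT_coe, sinT_coe, hε]
      constructor
      · rw [show (m:ℝ)*x + -(π/2) = -(π/2 - m*x) by ring, Real.cos_neg, Real.cos_pi_div_two_sub]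
      · rw [show (m:ℝ)*x + -(π/2) = -(π/2 - m*x) by ring, Real.sin_neg, Real.sin_pi_div_two_sub]
        ring
    · -- j = 1, ε = -1 : a = -m, dd = 0
      refine ⟨-(m:ℝ), 0, by simpa using hmne, fun x => ?_⟩
      rw [show ((1:Fin 2) - 1) = 0 from fin_sub_one, fT_zero, fT_one, cosT_coe, sinT_coe, hε]
      constructor
      · rw [show -(m:ℝ)*x + 0 = -(m*x) by ring, Real.cos_neg]
      · rw [show -(m:ℝ)*x + 0 = -(m*x) by ring, Real.sin_neg]
        ring

lemma hh_neg (w : V3) : HH (w.1 + π, w.2.1, w.2.2) = - HH w := by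
  show Real.cos (w.1 + π) * AA w + Real.sin (w.1 + π) * BB w
      = -(Real.cos w.1 * AA w + Real.sin w.1 * BB w)
  rw [Real.cos_add_pi, Real.sin_add_pi]
  ring

lemma F_repr (m₁ m₂ m₃ : ℕ) (h₁ : 0 < m₁) (h₂ : 0 < m₂) (h₃ : 0 < m₃)
    (j₁ j₂ j₃ : Fin 2) (ε : ℝ) (hε : ε = 1 ∨ ε = -1) :
    ∃ α d : V3, α.1 ≠ 0 ∧ α.2.1 ≠ 0 ∧ α.2.2 ≠ 0 ∧ ∀ y : V3,
      (fT j₁ m₁ (q3 y).1 * fT j₂ m₂ (q3 y).2.1 * fT j₃ m₃ (q3 y).2.2 +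
        ε * (fT (1 - j₁) m₁ (q3 y).1 * fT (1 - j₂) m₂ (q3 y).2.1 * fT (1 - j₃) m₃ (q3 y).2.2))
        = HH (α.1*y.1 + d.1, α.2.1*y.2.1 + d.2.1, α.2.2*y.2.2 + d.2.2) := by
  obtain ⟨a1, d1, ha1, hc1⟩ := coord1_repr j₁ m₁ h₁ ε hε
  obtain ⟨a2, d2, ha2, hc2⟩ := coord_repr j₂ m₂ h₂
  obtain ⟨a3, d3, ha3, hc3⟩ := coord_repr j₃ m₃ h₃
  refine ⟨(a1, a2, a3), (d1, d2, d3), ha1, ha2, ha3, fun y => ?_⟩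
  have hq1 : (q3 y).1 = ((y.1 : ℝ) : AddCircle (2*π)) := rfl
  have hq2 : (q3 y).2.1 = ((y.2.1 : ℝ) : AddCircle (2*π)) := rfl
  have hq3' : (q3 y).2.2 = ((y.2.2 : ℝ) : AddCircle (2*π)) := rfl
  rw [hq1, hq2, hq3']
  have e1 := hc1 y.1
  have e2 := hc2 y.2.1
  have e3 := hc3 y.2.2
  show _ = Real.cos (a1*y.1 + d1) * (Real.cos (a2*y.2.1 + d2) * Real.cos (a3*y.2.2 + d3))
      + Real.sin (a1*y.1 + d1) * (Real.sin (a2*y.2.1 + d2) * Real.sin (a3*y.2.2 + d3))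
  rw [e1.1, e2.1, e3.1, ← e1.2, ← e2.2, ← e3.2]
  ring

lemma count_two (Fv : T3 → ℝ) (hcont : Continuous Fv)
    (hP : IsPathConnected {p : T3 | 0 < Fv p}) (hN : IsPathConnected {p : T3 | Fv p < 0}) :
    Nat.card (ConnectedComponents {p : T3 // Fv p ≠ 0}) = 2 := by
  classical
  set X := {p : T3 // Fv p ≠ 0} with hX
  have hopos : IsOpen {x : X | 0 < Fv x.1} :=
    (isOpen_lt continuous_const (hcont.comp continuous_subtype_val))
  have honeg : IsOpen {x : X | Fv x.1 < 0} :=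
    (isOpen_lt (hcont.comp continuous_subtype_val) continuous_const)
  have hgc : Continuous (fun x : X => decide (0 < Fv x.1)) := by
    apply IsLocallyConstant.continuous
    apply IsLocallyConstant.iff_isOpen_fiber.mpr
    intro b
    cases b
    · have : ((fun x : X => decide (0 < Fv x.1)) ⁻¹' {false}) = {x : X | Fv x.1 < 0} := by
        ext x
        simp only [Set.mem_preimage, Set.mem_singleton_iff, decide_eq_false_iff_not,
          Set.mem_setOf_eq, not_lt]
        constructor
        · intro h; exact lt_of_le_of_ne h x.2
        · intro h; exact le_of_lt h
      rw [this]; exact honeg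
    · have : ((fun x : X => decide (0 < Fv x.1)) ⁻¹' {true}) = {x : X | 0 < Fv x.1} := by
        ext x
        simp only [Set.mem_preimage, Set.mem_singleton_iff, decide_eq_true_eq, Set.mem_setOf_eq]
      rw [this]; exact hopos
  have hPre : IsPreconnected {x : X | 0 < Fv x.1} := by
    have h1 : Subtype.val '' ((Subtype.val : X → T3) ⁻¹' {p : T3 | 0 < Fv p})
        = {p : T3 | Fv p ≠ 0} ∩ {p : T3 | 0 < Fv p} := Subtype.image_preimage_val _ _
    have h2 : {p : T3 | Fv p ≠ 0} ∩ {p : T3 | 0 < Fv p} = {p : T3 | 0 < Fv p} := by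
      apply Set.inter_eq_right.mpr
      intro p hp; exact ne_of_gt hp
    have h3 : IsPreconnected (Subtype.val '' ((Subtype.val : X → T3) ⁻¹' {p : T3 | 0 < Fv p})) := by
      rw [h1, h2]; exact hP.isConnected.isPreconnected
    exact (Topology.IsInducing.subtypeVal.isPreconnected_image).mp h3
  have hNre : IsPreconnected {x : X | Fv x.1 < 0} := by
    have h1 : Subtype.val '' ((Subtype.val : X → T3) ⁻¹' {p : T3 | Fv p < 0})
        = {p : T3 | Fv p ≠ 0} ∩ {p : T3 | Fv p < 0} := Subtype.image_preimage_val _ _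
    have h2 : {p : T3 | Fv p ≠ 0} ∩ {p : T3 | Fv p < 0} = {p : T3 | Fv p < 0} := by
      apply Set.inter_eq_right.mpr
      intro p hp; exact ne_of_lt hp
    have h3 : IsPreconnected (Subtype.val '' ((Subtype.val : X → T3) ⁻¹' {p : T3 | Fv p < 0})) := by
      rw [h1, h2]; exact hN.isConnected.isPreconnected
    exact (Topology.IsInducing.subtypeVal.isPreconnected_image).mp h3
  obtain ⟨pP, hpP, _⟩ := hP
  obtain ⟨pN, hpN, _⟩ := hN
  have hpP' : (0:ℝ) < Fv pP := hpP
  have hpN' : Fv pN < 0 := hpN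
  set xP : X := ⟨pP, hpP'.ne'⟩ with hxP
  set xN : X := ⟨pN, hpN'.ne⟩ with hxN
  rw [Nat.card_eq_two_iff]
  refine ⟨ConnectedComponents.mk xP, ConnectedComponents.mk xN, ?_, ?_⟩
  · intro h
    have := congrArg hgc.connectedComponentsLift h
    rw [Continuous.connectedComponentsLift_apply_coe, Continuous.connectedComponentsLift_apply_coe]
      at this
    simp only [hxP, hxN, decide_eq_true_eq] at this
    rw [decide_eq_true (by exact hpP')] at this
    rw [decide_eq_false (by exact not_lt.mpr (le_of_lt hpN'))] at this
    exact Bool.true_eq_false.mp this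
  · ext c
    simp only [Set.mem_insert_iff, Set.mem_singleton_iff, Set.mem_univ, iff_true]
    obtain ⟨x, rfl⟩ := ConnectedComponents.surjective_coe c
    rcases lt_or_gt_of_ne x.2 with hneg | hpos
    · right
      apply ConnectedComponents.coe_eq_coe.mpr
      apply connectedComponent_eq
      exact hNre.subset_connectedComponent (Set.mem_setOf_eq ▸ hneg) (show xN ∈ _ from hpN')
    · left
      apply ConnectedComponents.coe_eq_coe.mpr
      apply connectedComponent_eq
      exact hPre.subset_connectedComponent (Set.mem_setOf_eq ▸ hpos) (show xP ∈ _ from hpP')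

lemma fT_continuous (j : Fin 2) (m : ℕ) : Continuous (fT j m) := by
  unfold fT
  split
  · unfold cosT Function.Periodic.lift
    exact Continuous.quotient_liftOn' (by fun_prop) _
  · unfold sinT Function.Periodic.lift
    exact Continuous.quotient_liftOn' (by fun_prop) _


/-- Case 1 of the paper's eigenbasis of the flat 3-torus: for positive integers
`m₁, m₂, m₃`, indices `j₁, j₂, j₃ ∈ {0,1}` and a sign `ε = ±1`, the function
`F(x₁,x₂,x₃) = f_{j₁}(m₁x₁) f_{j₂}(m₂x₂) f_{j₃}(m₃x₃)
  + ε f_{1-j₁}(m₁x₁) f_{1-j₂}(m₂x₂) f_{1-j₃}(m₃x₃)` on `T³`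
has exactly two nodal domains. -/
theorem stmt8 (m₁ m₂ m₃ : ℕ) (h₁ : 0 < m₁) (h₂ : 0 < m₂) (h₃ : 0 < m₃)
    (j₁ j₂ j₃ : Fin 2) (ε : ℝ) (hε : ε = 1 ∨ ε = -1) :
    Nat.card (ConnectedComponents
      {p : T3 // fT j₁ m₁ p.1 * fT j₂ m₂ p.2.1 * fT j₃ m₃ p.2.2 +
        ε * (fT (1 - j₁) m₁ p.1 * fT (1 - j₂) m₂ p.2.1 * fT (1 - j₃) m₃ p.2.2) ≠ 0}) = 2 := by
  classical
  obtain ⟨α, d, ha1, ha2, ha3, hrepr⟩ := F_repr m₁ m₂ m₃ h₁ h₂ h₃ j₁ j₂ j₃ ε hε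
  set Fv : T3 → ℝ := fun p => fT j₁ m₁ p.1 * fT j₂ m₂ p.2.1 * fT j₃ m₃ p.2.2 +
      ε * (fT (1 - j₁) m₁ p.1 * fT (1 - j₂) m₂ p.2.1 * fT (1 - j₃) m₃ p.2.2) with hFv
  have hcont : Continuous Fv := by
    rw [hFv]
    refine Continuous.add ?_ (continuous_const.mul ?_)
    · exact (((fT_continuous j₁ m₁).comp continuous_fst).mul
        ((fT_continuous j₂ m₂).comp (continuous_fst.comp continuous_snd))).mul
        ((fT_continuous j₃ m₃).comp (continuous_snd.comp continuous_snd))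
    · exact (((fT_continuous (1-j₁) m₁).comp continuous_fst).mul
        ((fT_continuous (1-j₂) m₂).comp (continuous_fst.comp continuous_snd))).mul
        ((fT_continuous (1-j₃) m₃).comp (continuous_snd.comp continuous_snd))
  have hFq : ∀ y : V3, Fv (q3 y)
      = HH (α.1*y.1 + d.1, α.2.1*y.2.1 + d.2.1, α.2.2*y.2.2 + d.2.2) := fun y => hrepr y
  have hP : IsPathConnected {p : T3 | 0 < Fv p} := master α d ha1 ha2 ha3 Fv hFq
  have hNq : ∀ y : V3, (fun p => -Fv p) (q3 y)
      = HH (α.1*y.1 + (d.1 + π), α.2.1*y.2.1 + d.2.1, α.2.2*y.2.2 + d.2.2) := by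
    intro y
    show -Fv (q3 y) = _
    have e : α.1*y.1 + (d.1 + π) = (α.1*y.1 + d.1) + π := by ring
    rw [e, hh_neg (α.1*y.1 + d.1, α.2.1*y.2.1 + d.2.1, α.2.2*y.2.2 + d.2.2), hFq y]
  have hN' : IsPathConnected {p : T3 | 0 < (fun p => -Fv p) p} :=
    master α (d.1 + π, d.2.1, d.2.2) ha1 ha2 ha3 (fun p => -Fv p) hNq
  have hN : IsPathConnected {p : T3 | Fv p < 0} := by
    have : {p : T3 | 0 < (fun p => -Fv p) p} = {p : T3 | Fv p < 0} := by
      ext p; simp [neg_pos]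
    rwa [this] at hN'
  exact count_two Fv hcont hP hN
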